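/- Under the stated drift hypotheses, for every m ∈ ℕ and every s with 1 < s < ρ^{-1}, almost surely E[s^{τ_{K,m}} | 𝓕_m] ≤ e^{η(X_m − K)} · (s − 1)/(1 − ρ s) + 1. -/

import Mathlib

open Real Topology

lemma enat_lt_sInf_iff (S : Set ℕ) (n : ℕ) :
    (n : ℕ∞) < sInf ((fun j : ℕ => (j : ℕ∞)) '' S) ↔ ∀ j ≤ n, j ∉ S := by
  constructor
  · intro h j hj hjS
    have h1 : sInf ((fun j : ℕ => (j : ℕ∞)) '' S) ≤ (j : ℕ∞) := sInf_le ⟨j, hjS, rfl⟩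
    have h2 : (j : ℕ∞) ≤ (n : ℕ∞) := by exact_mod_cast hj
    exact absurd (h1.trans h2) (not_le.2 h)
  · intro h
    have h1 : ((n + 1 : ℕ) : ℕ∞) ≤ sInf ((fun j : ℕ => (j : ℕ∞)) '' S) := by
      apply le_sInf
      rintro b ⟨j, hjS, rfl⟩
      have : n + 1 ≤ j := by
        by_contra hc
        exact h j (by omega) hjS
      simpa using (by exact_mod_cast this : ((n+1:ℕ):ℕ∞) ≤ (j:ℕ∞))
    refine lt_of_lt_of_le ?_ h1
    exact_mod_cast Nat.lt_succ_self n

lemma enat_sInf_eq_coe {S : Set ℕ} {N : ℕ}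
    (h : sInf ((fun j : ℕ => (j : ℕ∞)) '' S) = (N : ℕ∞)) :
    ∀ n : ℕ, ((n : ℕ∞) < sInf ((fun j : ℕ => (j : ℕ∞)) '' S) ↔ n < N) := by
  intro n; rw [h]; exact_mod_cast Iff.rfl

open Real Topology

lemma hasDerivAt_phi (t : ℝ) :
    HasDerivAt (fun x : ℝ => (x - 2) * Real.exp x + x + 2) ((t - 1) * Real.exp t + 1) t := by
  have h1 : HasDerivAt (fun x : ℝ => (x - 2) * Real.exp x)
      (1 * Real.exp t + (t - 2) * Real.exp t) t :=
    ((hasDerivAt_id t).sub_const 2).mul (Real.hasDerivAt_exp t)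
  have h : HasDerivAt (fun x : ℝ => (x - 2) * Real.exp x + x + 2)
      ((1 * Real.exp t + (t - 2) * Real.exp t) + 1) t := (h1.add (hasDerivAt_id t)).add_const 2
  convert h using 1; ring

lemma phi'_nonneg (t : ℝ) : 0 ≤ (t - 1) * Real.exp t + 1 := by
  have h := Real.add_one_le_exp (-t)
  have h2 := mul_le_mul_of_nonneg_right h (Real.exp_pos t).le
  have h3 : Real.exp (-t) * Real.exp t = 1 := by rw [← Real.exp_add]; simp
  nlinarith [h2, h3]

lemma phi_nonneg (t : ℝ) (ht : 0 ≤ t) : 0 ≤ (t - 2) * Real.exp t + t + 2 := by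
  have hmono : MonotoneOn (fun t : ℝ => (t - 2) * Real.exp t + t + 2) (Set.Ici 0) := by
    apply monotoneOn_of_deriv_nonneg (convex_Ici 0)
    · fun_prop
    · intro t _
      exact (hasDerivAt_phi t).differentiableAt.differentiableWithinAt
    · intro t _
      rw [(hasDerivAt_phi t).deriv]
      exact phi'_nonneg t
  have := hmono Set.self_mem_Ici ht ht
  simpa using this

lemma exp_ratio_mono {a b : ℝ} (ha : 0 ≤ a) (hab : a ≤ b) :
    b ^ 2 * (Real.exp a - 1 - a) ≤ a ^ 2 * (Real.exp b - 1 - b) := by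
  rcases eq_or_lt_of_le ha with rfl | ha0
  · simp
  have hb0 : 0 < b := lt_of_lt_of_le ha0 hab
  have hg : ∀ t : ℝ, 0 < t → HasDerivAt (fun x : ℝ => (Real.exp x - 1 - x) / x ^ 2)
      (((Real.exp t - 1) * t ^ 2 - (Real.exp t - 1 - t) * (2 * t)) / (t ^ 2) ^ 2) t := by
    intro t ht
    have h1 : HasDerivAt (fun x : ℝ => Real.exp x - 1 - x) (Real.exp t - 1) t :=
      ((Real.hasDerivAt_exp t).sub_const 1).sub (hasDerivAt_id t)
    have h2 : HasDerivAt (fun x : ℝ => x ^ 2) (2 * t) t := by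
      simpa using hasDerivAt_pow 2 t
    exact h1.div h2 (by positivity)
  have hmono : MonotoneOn (fun x : ℝ => (Real.exp x - 1 - x) / x ^ 2) (Set.Icc a b) := by
    apply monotoneOn_of_deriv_nonneg (convex_Icc a b)
    · apply ContinuousOn.div (by fun_prop) (by fun_prop)
      intro x hx
      have : 0 < x := lt_of_lt_of_le ha0 hx.1
      positivity
    · intro t ht
      rw [interior_Icc] at ht
      exact (hg t (lt_trans ha0 ht.1)).differentiableAt.differentiableWithinAt
    · intro t ht
      rw [interior_Icc] at ht
      have ht0 : 0 < t := lt_trans ha0 ht.1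
      rw [(hg t ht0).deriv]
      apply div_nonneg _ (by positivity)
      have hnum : (Real.exp t - 1) * t ^ 2 - (Real.exp t - 1 - t) * (2 * t)
          = t * ((t - 2) * Real.exp t + t + 2) := by ring
      rw [hnum]
      exact mul_nonneg ht0.le (phi_nonneg t ht0.le)
  have h := hmono (Set.left_mem_Icc.2 hab) (Set.right_mem_Icc.2 hab) hab
  simp only at h
  rw [div_le_div_iff₀ (by positivity) (by positivity)] at h
  nlinarith [h]

lemma two_mul_le_exp_sub (u : ℝ) (hu : 0 ≤ u) : 2 * u ≤ Real.exp u - Real.exp (-u) := by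
  have hmono : MonotoneOn (fun x : ℝ => Real.exp x - Real.exp (-x) - 2 * x) (Set.Ici 0) := by
    apply monotoneOn_of_deriv_nonneg (convex_Ici 0) (by fun_prop)
    · intro t _
      exact (((Real.hasDerivAt_exp t).sub
        (((hasDerivAt_id t).neg).exp)).sub
        ((hasDerivAt_id t).const_mul 2)).differentiableAt.differentiableWithinAt
    · intro t _
      have hd : HasDerivAt (fun x : ℝ => Real.exp x - Real.exp (-x) - 2 * x)
          (Real.exp t - Real.exp (-t) * (-1) - 2 * 1) t := by
        have h1 : HasDerivAt (fun x : ℝ => Real.exp (-x)) (Real.exp (-t) * (-1)) t := by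
          simpa using ((hasDerivAt_id t).neg).exp
        exact ((Real.hasDerivAt_exp t).sub h1).sub ((hasDerivAt_id t).const_mul 2)
      rw [hd.deriv]
      nlinarith [sq_nonneg (Real.exp t - 1), Real.exp_pos t, Real.exp_neg t,
        mul_pos (Real.exp_pos t) (Real.exp_pos (-t)),
        (by rw [← Real.exp_add]; simp : Real.exp t * Real.exp (-t) = 1)]
  have := hmono Set.self_mem_Ici hu hu
  simp only [neg_zero, Real.exp_zero] at this
  linarith [this]

lemma exp_quad_bound {x k lam η : ℝ} (hx : |x| ≤ k) (hk : 0 < k) (hη : 0 < η)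
    (hηlam : η ≤ lam) :
    Real.exp (η * x) ≤ 1 + η * x +
      ((Real.exp (lam * k) - 1 - lam * k) / lam ^ 2) * η ^ 2 := by
  set u := η * |x| with hu
  have hu0 : 0 ≤ u := mul_nonneg hη.le (abs_nonneg x)
  have hulk : u ≤ lam * k :=
    mul_le_mul hηlam hx (abs_nonneg x) (le_of_lt (lt_of_lt_of_le hη hηlam))
  have h1 : Real.exp (η * x) - 1 - η * x ≤ Real.exp u - 1 - u := by
    rcases abs_cases x with ⟨hax, _⟩ | ⟨hax, hxneg⟩
    · rw [hu, hax]
    · rw [hu, hax, mul_neg]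
      have := two_mul_le_exp_sub (η * (-x)) (by nlinarith)
      have heq : η * -x = -(η * x) := by ring
      rw [heq, neg_neg] at this
      linarith
  have hE : 0 ≤ Real.exp (lam * k) - 1 - lam * k := by
    have := Real.add_one_le_exp (lam * k); linarith
  have h2 : (lam * k) ^ 2 * (Real.exp u - 1 - u) ≤
      u ^ 2 * (Real.exp (lam * k) - 1 - lam * k) := exp_ratio_mono hu0 hulk
  have husq : u ^ 2 ≤ (η * k) ^ 2 := by
    have h3 : u ≤ η * k := mul_le_mul_of_nonneg_left hx hη.le
    nlinarith
  have hlamk : 0 < lam * k := mul_pos (lt_of_lt_of_le hη hηlam) hk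
  have h4 : (lam * k) ^ 2 * (Real.exp (η * x) - 1 - η * x) ≤
      (η * k) ^ 2 * (Real.exp (lam * k) - 1 - lam * k) := by nlinarith
  have hlam0 : 0 < lam := lt_of_lt_of_le hη hηlam
  have h5 : Real.exp (η * x) - 1 - η * x ≤
      (Real.exp (lam * k) - 1 - lam * k) / lam ^ 2 * η ^ 2 := by
    rw [div_mul_eq_mul_div, le_div_iff₀ (by positivity)]
    nlinarith [h4, mul_pos hk hk]
  linarith

open MeasureTheory Filter

set_option maxHeartbeats 2000000 in
theorem stmt_2
    {Ω : Type*} {m0 : MeasurableSpace Ω} {μ : Measure Ω} [IsProbabilityMeasure μ]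
    (ℱ : Filtration ℕ m0) (X : ℕ → Ω → ℝ) (hadp : Adapted ℱ X)
    (x0 : ℝ) (hX0 : ∀ᵐ ω ∂μ, X 0 ω = x0)
    (k ε K : ℝ) (hk : 0 < k) (hε0 : 0 < ε) (hεk : ε ≤ k)
    (hbdd : ∀ n : ℕ, ∀ᵐ ω ∂μ, |X (n + 1) ω - X n ω| ≤ k)
    (hdrift : ∀ n : ℕ, ∀ᵐ ω ∂μ, K ≤ X n ω →
      (μ[(fun ω' => X (n + 1) ω' - X n ω') | ℱ n]) ω ≤ -ε)
    (lam : ℝ) (hlam : 0 < lam)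
    (c η ρ D : ℝ)
    (hc : c = (Real.exp (lam * k) - 1 - lam * k) / lam ^ 2)
    (hη0 : 0 < η) (hηlt : η < min lam (ε / (2 * c)))
    (hρ : ρ = 1 - η * ε / 2)
    (hD : D = Real.exp (lam * k))
    (τ : ℕ → Ω → ℕ∞)
    (hτ : ∀ m ω, τ m ω = sInf ((fun n : ℕ => (n : ℕ∞)) '' {n : ℕ | X (m + n) ω ≤ K})) :
    ∀ m : ℕ, ∀ s : ℝ, 1 < s → s < ρ⁻¹ → ∀ᵐ ω ∂μ,
      (μ[(fun ω' => s ^ (τ m ω').toNat) | ℱ m]) ω ≤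
        Real.exp (η * (X m ω - K)) * ((s - 1) / (1 - ρ * s)) + 1 := by
  intro m s hs1 hs2
  -- constants
  have hηlam : η ≤ lam := (lt_min_iff.1 hηlt).1.le
  have hc0 : 0 < c := by
    rw [hc]
    apply div_pos _ (by positivity)
    have := Real.add_one_lt_exp (show lam * k ≠ 0 by positivity)
    linarith
  have hcη : c * η ≤ ε / 2 := by
    have h2 := (lt_min_iff.1 hηlt).2
    rw [lt_div_iff₀ (by positivity)] at h2
    nlinarith
  have hρpos : 0 < ρ := inv_pos.1 (lt_trans (lt_trans one_pos hs1) hs2)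
  have hρs : ρ * s < 1 := by
    have := mul_lt_mul_of_pos_left hs2 hρpos
    rwa [mul_inv_cancel₀ hρpos.ne'] at this
  have hcontr : 1 + c * η ^ 2 - η * ε ≤ ρ := by rw [hρ]; nlinarith
  have hq0 : 0 < (s - 1) / (1 - ρ * s) := by
    apply div_pos <;> linarith
  set q : ℝ := (s - 1) / (1 - ρ * s) with hq
  -- measurability / integrability prep
  have hXsm : ∀ j, StronglyMeasurable[m0] (X j) := fun j => ((hadp j).mono (ℱ.le j) le_rfl).stronglyMeasurable
  have hWsm : ∀ j, StronglyMeasurable[ℱ j] (fun ω => Real.exp (η * (X j ω - K))) := by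
    intro j
    exact Real.continuous_exp.comp_stronglyMeasurable
      (((hadp j).stronglyMeasurable.sub stronglyMeasurable_const).const_mul η)
  have hWsm0 : ∀ j, StronglyMeasurable[m0] (fun ω => Real.exp (η * (X j ω - K))) :=
    fun j => (hWsm j).mono (ℱ.le j)
  have hXae : ∀ᵐ ω ∂μ, ∀ n, |X n ω| ≤ |x0| + n * k := by
    filter_upwards [hX0, ae_all_iff.2 hbdd] with ω h0 hb
    intro n
    induction n with
    | zero => simp [h0]
    | succ n ih =>
      have h1 : |X (n+1) ω| - |X n ω| ≤ k := le_trans (abs_sub_abs_le_abs_sub _ _) (hb n)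
      push_cast
      linarith
  set C : ℕ → ℝ := fun j => Real.exp (η * ((|x0| + j * k) + |K|)) with hCdef
  have hWbd : ∀ j, ∀ᵐ ω ∂μ, Real.exp (η * (X j ω - K)) ≤ C j := by
    intro j
    filter_upwards [hXae] with ω hx
    apply Real.exp_le_exp.2
    have h2 : -K ≤ |K| := neg_le_abs K
    have h3 : X j ω ≤ |x0| + j * k := (abs_le.1 (hx j)).2
    nlinarith [hη0.le]
  have hEint : ∀ j, Integrable (fun ω => Real.exp (η * (X j ω - K))) μ := by
    intro j
    apply Integrable.mono' (integrable_const (C j)) (hWsm0 j).aestronglyMeasurable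
    filter_upwards [hWbd j] with ω hw
    rwa [Real.norm_eq_abs, abs_of_pos (Real.exp_pos _)]
  have hΔint : ∀ j, Integrable (fun ω => X (j+1) ω - X j ω) μ := by
    intro j
    apply Integrable.mono' (integrable_const k)
      ((hXsm (j+1)).sub (hXsm j)).aestronglyMeasurable
    filter_upwards [hbdd j] with ω hb
    simpa using hb
  -- the events
  set G : ℕ → Set Ω := fun n => {ω | ∀ j ≤ n, K < X (m + j) ω} with hG
  have hGmeas : ∀ n, MeasurableSet[ℱ (m+n)] (G n) := by
    intro n
    have : G n = ⋂ j ∈ {j : ℕ | j ≤ n}, {ω | K < X (m + j) ω} := by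
      ext ω; simp [hG]
    rw [this]
    apply MeasurableSet.biInter (Set.to_countable _)
    intro j hj
    simp only [Set.mem_setOf_eq] at hj
    have hm : Measurable[ℱ (m+j)] (X (m+j)) := hadp (m+j)
    exact measurableSet_lt measurable_const
      (hm.mono (ℱ.mono (by omega)) le_rfl)
  have hGm0 : ∀ n, MeasurableSet (G n) := fun n => ℱ.le _ _ (hGmeas n)
  have hGsub : ∀ n, G (n+1) ⊆ G n := fun n ω h j hj => h j (by omega)
  have hGτ : ∀ n ω, ω ∈ G n ↔ (n : ℕ∞) < τ m ω := by
    intro n ω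
    rw [hτ, enat_lt_sInf_iff]
    constructor
    · intro h j hj hjS
      exact absurd (h j hj) (not_lt.2 hjS)
    · intro h j hj
      have := h j hj
      simp only [Set.mem_setOf_eq] at this
      linarith [not_le.1 this]
  have key : ∀ A : Set Ω, MeasurableSet[ℱ m] A → ∀ n : ℕ,
      (μ (A ∩ G n)).toReal ≤ ρ ^ n * ∫ ω in A, Real.exp (η * (X m ω - K)) ∂μ := by
    intro A hA n
    have hAm0 : MeasurableSet A := ℱ.le m A hA
    have hAG : ∀ i, MeasurableSet[ℱ (m+i)] (A ∩ G i) :=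
      fun i => ((ℱ.mono (Nat.le_add_right m i)) A hA).inter (hGmeas i)
    have hAGm0 : ∀ i, MeasurableSet (A ∩ G i) := fun i => ℱ.le _ _ (hAG i)
    set J : ℕ → ℝ := fun i => ∫ ω in A ∩ G i, Real.exp (η * (X (m+i) ω - K)) ∂μ with hJ
    have hJnonneg : ∀ i, 0 ≤ J i := fun i =>
      setIntegral_nonneg (hAGm0 i) (fun ω _ => (Real.exp_pos _).le)
    have hstep : ∀ i, J (i+1) ≤ ρ * J i := by
      intro i
      set j := m + i with hjdef
      set W : Ω → ℝ := fun ω => Real.exp (η * (X j ω - K)) with hWdef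
      set Δ : Ω → ℝ := fun ω => X (j+1) ω - X j ω with hΔdef
      have hΔmeas : AEStronglyMeasurable Δ μ :=
        ((hXsm (j+1)).sub (hXsm j)).aestronglyMeasurable
      have hWΔsm : AEStronglyMeasurable (fun ω => W ω * Δ ω) μ :=
        ((hWsm0 j).mul ((hXsm (j+1)).sub (hXsm j))).aestronglyMeasurable
      have hWΔint : Integrable (fun ω => W ω * Δ ω) μ := by
        apply Integrable.mono' (integrable_const (C j * k)) hWΔsm
        filter_upwards [hWbd j, hbdd j] with ω hw hb
        rw [norm_mul, Real.norm_eq_abs, Real.norm_eq_abs, abs_of_pos (Real.exp_pos _)]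
        exact mul_le_mul hw hb (abs_nonneg _) (le_trans (Real.exp_pos _).le hw)
      have step1 : J (i+1) ≤ ∫ ω in A ∩ G i, Real.exp (η * (X (j+1) ω - K)) ∂μ := by
        apply setIntegral_mono_set (hEint (j+1)).integrableOn
          (ae_restrict_of_ae (Eventually.of_forall fun ω => (Real.exp_pos _).le))
          (HasSubset.Subset.eventuallyLE (Set.inter_subset_inter_right A (hGsub i)))
      have step2ae : ∀ᵐ ω ∂μ, Real.exp (η * (X (j+1) ω - K)) ≤
          (1 + c * η ^ 2) * W ω + η * (W ω * Δ ω) := by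
        filter_upwards [hbdd j] with ω hb
        have h1 : Real.exp (η * (X (j+1) ω - K)) = W ω * Real.exp (η * Δ ω) := by
          rw [hWdef, hΔdef, ← Real.exp_add]
          ring_nf
        have h2 : Real.exp (η * Δ ω) ≤ 1 + η * Δ ω + c * η ^ 2 := by
          rw [hc]
          have := exp_quad_bound hb hk hη0 hηlam
          linarith [this]
        have h3 : (0:ℝ) < W ω := Real.exp_pos _
        rw [h1]
        nlinarith [mul_le_mul_of_nonneg_left h2 h3.le]
      have step2 : ∫ ω in A ∩ G i, Real.exp (η * (X (j+1) ω - K)) ∂μ ≤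
          (1 + c * η ^ 2) * J i + η * ∫ ω in A ∩ G i, W ω * Δ ω ∂μ := by
        have hint1 : IntegrableOn (fun ω => (1 + c * η ^ 2) * W ω + η * (W ω * Δ ω))
            (A ∩ G i) μ := (((hEint j).const_mul _).add (hWΔint.const_mul _)).integrableOn
        have h := setIntegral_mono_ae (hEint (j+1)).integrableOn hint1 step2ae
        rw [integral_add ((hEint j).const_mul _).integrableOn (hWΔint.const_mul _).integrableOn,
          integral_const_mul, integral_const_mul] at h
        exact h
      have step3 : ∫ ω in A ∩ G i, W ω * Δ ω ∂μ ≤ -ε * J i := by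
        set B := A ∩ G i with hB
        set WI : Ω → ℝ := B.indicator W with hWI
        have hWIsm : StronglyMeasurable[ℱ j] WI := (hWsm j).indicator (hAG i)
        have e1 : ∫ ω in B, W ω * Δ ω ∂μ = ∫ ω, WI ω * Δ ω ∂μ := by
          rw [← integral_indicator (hAGm0 i)]
          congr 1
          funext ω
          by_cases hω : ω ∈ B
          · rw [Set.indicator_of_mem hω, hWI, Set.indicator_of_mem hω]
          · rw [Set.indicator_of_notMem hω, hWI, Set.indicator_of_notMem hω]; simp
        have e2 : Integrable (fun ω => WI ω * Δ ω) μ := by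
          apply Integrable.mono' hWΔint.norm
            (((hWIsm.mono (ℱ.le j)).aestronglyMeasurable).mul hΔmeas)
          apply Eventually.of_forall
          intro ω
          have hle : |WI ω| ≤ |W ω| := by
            have := norm_indicator_le_norm_self (s := B) (f := W) (a := ω)
            simpa [hWI, Real.norm_eq_abs] using this
          simp only [Pi.mul_apply, norm_mul, Real.norm_eq_abs, abs_mul]
          exact mul_le_mul_of_nonneg_right hle (abs_nonneg _)
        have e2' : Integrable (WI * Δ) μ := e2
        have e3 : ∫ ω, WI ω * Δ ω ∂μ = ∫ ω, WI ω * (μ[Δ | ℱ j]) ω ∂μ := by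
          calc ∫ ω, WI ω * Δ ω ∂μ = ∫ ω, (μ[WI * Δ | ℱ j]) ω ∂μ :=
                (integral_condExp (ℱ.le j)).symm
            _ = ∫ ω, (WI * μ[Δ | ℱ j]) ω ∂μ :=
                integral_congr_ae (condExp_mul_of_stronglyMeasurable_left hWIsm e2' (hΔint j))
            _ = _ := rfl
        have hcdint : Integrable (μ[Δ | ℱ j]) μ := integrable_condExp
        have hcdsm : AEStronglyMeasurable (μ[Δ | ℱ j]) μ :=
          (stronglyMeasurable_condExp.mono (ℱ.le j)).aestronglyMeasurable
        have int1 : Integrable (fun ω => WI ω * (μ[Δ | ℱ j]) ω) μ := by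
          apply Integrable.mono' (hcdint.norm.const_mul (C j))
            (((hWIsm.mono (ℱ.le j)).aestronglyMeasurable).mul hcdsm)
          filter_upwards [hWbd j] with ω hw
          simp only [Pi.mul_apply, norm_mul]
          apply mul_le_mul_of_nonneg_right _ (norm_nonneg _)
          rcases Set.indicator_eq_zero_or_self B W ω with h | h <;>
            rw [hWI, h]
          · simpa using (Real.exp_pos (η * ((|x0| + (j:ℝ) * k) + |K|))).le
          · rw [Real.norm_eq_abs, abs_of_pos (Real.exp_pos _)]
            exact hw
        have int2 : Integrable (fun ω => -ε * WI ω) μ :=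
          (((hEint j).indicator (hAGm0 i)).const_mul (-ε))
        have e4 : ∫ ω, WI ω * (μ[Δ | ℱ j]) ω ∂μ ≤ ∫ ω, -ε * WI ω ∂μ := by
          apply integral_mono_ae int1 int2
          filter_upwards [hdrift j] with ω hd
          by_cases hω : ω ∈ B
          · have hXK : K ≤ X j ω := (hω.2 i le_rfl).le
            have h5 := hd hXK
            have hWpos : 0 ≤ WI ω := by
              rw [hWI, Set.indicator_of_mem hω]
              exact (Real.exp_pos _).le
            nlinarith
          · rw [hWI, Set.indicator_of_notMem hω]
            simp
        have e5 : ∫ ω, -ε * WI ω ∂μ = -ε * J i := by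
          rw [integral_const_mul, hWI, integral_indicator (hAGm0 i)]
        rw [e1, e3, ← e5]
        exact e4
      have := step1.trans (step2.trans (by nlinarith [hJnonneg i, step3, hη0.le] :
        (1 + c * η ^ 2) * J i + η * ∫ ω in A ∩ G i, W ω * Δ ω ∂μ ≤ ρ * J i))
      exact this
    have hJle : ∀ i, J i ≤ ρ ^ i * J 0 := by
      intro i
      induction i with
      | zero => simp
      | succ i ih =>
        calc J (i+1) ≤ ρ * J i := hstep i
          _ ≤ ρ * (ρ ^ i * J 0) := mul_le_mul_of_nonneg_left ih hρpos.le
          _ = ρ ^ (i+1) * J 0 := by ring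
    have hJ0le : J 0 ≤ ∫ ω in A, Real.exp (η * (X m ω - K)) ∂μ := by
      apply setIntegral_mono_set (hEint m).integrableOn
        (ae_restrict_of_ae (Eventually.of_forall fun ω => (Real.exp_pos _).le))
        (HasSubset.Subset.eventuallyLE Set.inter_subset_left)
    have hμJ : (μ (A ∩ G n)).toReal ≤ J n := by
      have h1 : ∀ ω ∈ A ∩ G n, (1:ℝ) ≤ Real.exp (η * (X (m+n) ω - K)) := by
        intro ω hω
        have h2 := hω.2 n le_rfl
        rw [← Real.exp_zero]
        apply Real.exp_le_exp.2
        nlinarith [hη0.le]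
      calc (μ (A ∩ G n)).toReal = ∫ _ω in A ∩ G n, (1:ℝ) ∂μ := by simp; rfl
        _ ≤ J n := setIntegral_mono_on (integrable_const 1).integrableOn
            (hEint (m+n)).integrableOn (hAGm0 n) h1
    calc (μ (A ∩ G n)).toReal ≤ J n := hμJ
      _ ≤ ρ ^ n * J 0 := hJle n
      _ ≤ ρ ^ n * ∫ ω in A, Real.exp (η * (X m ω - K)) ∂μ :=
          mul_le_mul_of_nonneg_left hJ0le (pow_nonneg hρpos.le n)
  -- the target bound function
  set g : Ω → ℝ := fun ω => Real.exp (η * (X m ω - K)) * q + 1 with hgdef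
  have hgsm : StronglyMeasurable[ℱ m] g := ((hWsm m).mul_const q).add_const 1
  have hgint : Integrable g μ := ((hEint m).mul_const q).add (integrable_const 1)
  set f : Ω → ℝ := fun ω' => s ^ (τ m ω').toNat with hfdef
  have hs0 : (0:ℝ) < s := lt_trans one_pos hs1
  by_cases hfi : Integrable f μ
  swap
  · rw [condExp_of_not_integrable hfi]
    apply Eventually.of_forall
    intro ω
    have h1 := Real.exp_pos (η * (X m ω - K))
    have : (0:ℝ) ≤ Real.exp (η * (X m ω - K)) * q := mul_nonneg h1.le hq0.le
    simp only [Pi.zero_apply]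
    linarith
  · -- integrable case
    have hf1 : ∀ ω, (1:ℝ) ≤ f ω := fun ω => one_le_pow₀ hs1.le
    set h : ℕ → Ω → ℝ := fun M ω =>
      1 + ∑ n ∈ Finset.range M, (G n).indicator (fun _ => (s-1) * s ^ n) ω with hhdef
    have hterm_nonneg : ∀ (n : ℕ) ω, 0 ≤ (G n).indicator (fun _ => (s-1) * s ^ n) ω := by
      intro n ω
      apply Set.indicator_nonneg
      intro _ _
      exact mul_nonneg (by linarith) (pow_nonneg hs0.le n)
    have hh1 : ∀ M ω, (1:ℝ) ≤ h M ω := by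
      intro M ω
      have := Finset.sum_nonneg (fun n (_ : n ∈ Finset.range M) => hterm_nonneg n ω)
      rw [hhdef]
      simpa using this
    have hhsm : ∀ M, StronglyMeasurable[m0] (h M) := by
      intro M
      apply Measurable.stronglyMeasurable
      apply Measurable.add measurable_const
      apply Finset.measurable_sum
      intro n _
      exact measurable_const.indicator (hGm0 n)
    have hhint : ∀ M, Integrable (h M) μ := fun M =>
      (integrable_const 1).add
        (integrable_finset_sum _ fun n _ => (integrable_const _).indicator (hGm0 n))
    have hval : ∀ (N : ℕ) ω, τ m ω = (N:ℕ∞) → ∀ M, N ≤ M → h M ω = f ω := by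
      intro N ω hN M hNM
      have hGiff : ∀ n : ℕ, ω ∈ G n ↔ n < N := by
        intro n
        rw [hGτ n ω, hN]
        exact_mod_cast Iff.rfl
      have hind : ∀ n : ℕ, (G n).indicator (fun _ => (s-1) * s ^ n) ω
          = if n < N then (s-1) * s ^ n else 0 := by
        intro n
        by_cases hn : n < N
        · rw [Set.indicator_of_mem ((hGiff n).2 hn), if_pos hn]
        · rw [Set.indicator_of_notMem (fun hh => hn ((hGiff n).1 hh)), if_neg hn]
      have hsum1 : ∑ n ∈ Finset.range M, (G n).indicator (fun _ => (s-1) * s ^ n) ω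
          = ∑ n ∈ Finset.range N, (s-1) * s ^ n := by
        simp only [hind]
        rw [← Finset.sum_subset (Finset.range_subset_range.2 hNM)]
        · apply Finset.sum_congr rfl
          intro n hn
          rw [if_pos (Finset.mem_range.1 hn)]
        · intro x _ hx
          rw [if_neg (fun hlt => hx (Finset.mem_range.2 hlt))]
      have hgeom : ∑ n ∈ Finset.range N, (s-1) * s ^ n = s ^ N - 1 := by
        have h2 := geom_sum_mul s N
        calc ∑ n ∈ Finset.range N, (s-1) * s ^ n
            = (∑ n ∈ Finset.range N, s ^ n) * (s - 1) := by
              rw [Finset.sum_mul]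
              exact Finset.sum_congr rfl fun n _ => by ring
          _ = s ^ N - 1 := h2
      rw [hhdef]
      simp only [hsum1, hgeom]
      rw [hfdef]
      simp only [hN, ENat.toNat_coe]
      ring
    have htop : ∀ ω, τ m ω = ⊤ → f ω = 1 := by
      intro ω hN
      rw [hfdef]
      simp [hN]
    set F : ℕ → Ω → ℝ := fun M ω => min (f ω) (h M ω) with hFdef
    have hFtend : ∀ ω, Tendsto (fun M => F M ω) atTop (𝓝 (f ω)) := by
      intro ω
      by_cases hN : τ m ω = ⊤
      · have hFc : ∀ M, F M ω = f ω := by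
          intro M
          rw [hFdef]
          simp only
          rw [htop ω hN]
          exact min_eq_left (hh1 M ω)
        simp only [hFc]
        exact tendsto_const_nhds
      · obtain ⟨N, hN⟩ := WithTop.ne_top_iff_exists.1 hN
        apply tendsto_atTop_of_eventually_const (i₀ := N)
        intro M hM
        rw [hFdef]
        simp only
        rw [hval N ω hN.symm M hM]
        exact min_self _
    have hFnonneg : ∀ M ω, (0:ℝ) ≤ F M ω := fun M ω =>
      le_min (le_trans zero_le_one (hf1 ω)) (le_trans zero_le_one (hh1 M ω))
    have hFlef : ∀ M ω, F M ω ≤ f ω := fun M ω => min_le_left _ _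
    have hFleh : ∀ M ω, F M ω ≤ h M ω := fun M ω => min_le_right _ _
    have hFmeas : ∀ M, AEStronglyMeasurable (F M) μ := by
      intro M
      have := hfi.1.inf ((hhsm M).aestronglyMeasurable)
      exact this
    have hgeosum : ∀ M : ℕ, ∑ n ∈ Finset.range M, (ρ*s) ^ n ≤ 1 / (1 - ρ*s) := by
      intro M
      have h2 := geom_sum_mul (ρ*s) M
      have h3 : (0:ℝ) ≤ (ρ*s) ^ M := pow_nonneg (mul_nonneg hρpos.le hs0.le) M
      rw [le_div_iff₀ (by linarith)]
      nlinarith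
    have intAbound : ∀ A : Set Ω, MeasurableSet[ℱ m] A →
        ∫ ω in A, f ω ∂μ ≤ ∫ ω in A, g ω ∂μ := by
      intro A hA
      have hAm0 : MeasurableSet A := ℱ.le m A hA
      set R := ∫ ω in A, Real.exp (η * (X m ω - K)) ∂μ with hR
      have hR0 : 0 ≤ R := setIntegral_nonneg hAm0 fun ω _ => (Real.exp_pos _).le
      have hgA : ∫ ω in A, g ω ∂μ = R * q + (μ A).toReal := by
        rw [hgdef]
        rw [integral_add ((hEint m).mul_const q).integrableOn (integrable_const 1).integrableOn]
        rw [integral_mul_const]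
        simp [hR]; rfl
      have hhA : ∀ M, ∫ ω in A, h M ω ∂μ ≤ (μ A).toReal + (s-1) * (1/(1-ρ*s)) * R := by
        intro M
        have hsplit : ∫ ω in A, h M ω ∂μ = (μ A).toReal
            + ∑ n ∈ Finset.range M, (s-1) * s ^ n * (μ (A ∩ G n)).toReal := by
          rw [hhdef]
          rw [integral_add (integrable_const (1:ℝ)).integrableOn
            (integrable_finset_sum _ fun n _ =>
              (integrable_const _).indicator (hGm0 n)).integrableOn]
          rw [integral_finset_sum _ (fun n _ =>
            (show Integrable _ (μ.restrict A) from
              ((integrable_const ((s-1) * s ^ n : ℝ)).indicator (hGm0 n)).integrableOn))]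
          congr 1
          · simp; rfl
          · apply Finset.sum_congr rfl
            intro n _
            rw [setIntegral_indicator (hGm0 n), setIntegral_const, smul_eq_mul]
            rw [Measure.real]; ring
        rw [hsplit]
        have hterm : ∀ n : ℕ, (s-1) * s ^ n * (μ (A ∩ G n)).toReal
            ≤ (s-1) * R * (ρ*s) ^ n := by
          intro n
          have h2 := key A hA n
          calc (s-1) * s ^ n * (μ (A ∩ G n)).toReal
              ≤ (s-1) * s ^ n * (ρ ^ n * R) := by
                apply mul_le_mul_of_nonneg_left h2
                exact mul_nonneg (by linarith) (pow_nonneg hs0.le n)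
            _ = (s-1) * R * (ρ*s) ^ n := by rw [mul_pow]; ring
        have h3 : ∑ n ∈ Finset.range M, (s-1) * s ^ n * (μ (A ∩ G n)).toReal
            ≤ (s-1) * R * (1/(1-ρ*s)) := by
          calc ∑ n ∈ Finset.range M, (s-1) * s ^ n * (μ (A ∩ G n)).toReal
              ≤ ∑ n ∈ Finset.range M, (s-1) * R * (ρ*s) ^ n :=
                Finset.sum_le_sum fun n _ => hterm n
            _ = (s-1) * R * ∑ n ∈ Finset.range M, (ρ*s) ^ n := by rw [Finset.mul_sum]
            _ ≤ (s-1) * R * (1/(1-ρ*s)) := by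
                apply mul_le_mul_of_nonneg_left (hgeosum M)
                exact mul_nonneg (by linarith) hR0
        linarith [h3]
      have hFint : ∀ M, IntegrableOn (F M) A μ := by
        intro M
        apply Integrable.mono' hfi.integrableOn ((hFmeas M).restrict)
        apply Eventually.of_forall
        intro ω
        rw [Real.norm_eq_abs, abs_of_nonneg (hFnonneg M ω)]
        exact hFlef M ω
      have hDCT : Tendsto (fun M => ∫ ω in A, F M ω ∂μ) atTop (𝓝 (∫ ω in A, f ω ∂μ)) := by
        apply tendsto_integral_of_dominated_convergence (fun ω => f ω)
          (fun M => (hFmeas M).restrict) hfi.integrableOn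
        · intro M
          apply Eventually.of_forall
          intro ω
          rw [Real.norm_eq_abs, abs_of_nonneg (hFnonneg M ω)]
          exact hFlef M ω
        · exact Eventually.of_forall fun ω => hFtend ω
      have hFle : ∀ M, ∫ ω in A, F M ω ∂μ ≤ ∫ ω in A, g ω ∂μ := by
        intro M
        calc ∫ ω in A, F M ω ∂μ ≤ ∫ ω in A, h M ω ∂μ :=
              integral_mono (hFint M) (hhint M).integrableOn (fun ω => hFleh M ω)
          _ ≤ (μ A).toReal + (s-1) * (1/(1-ρ*s)) * R := hhA M
          _ = R * q + (μ A).toReal := by rw [hq]; ring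
          _ = ∫ ω in A, g ω ∂μ := hgA.symm
      exact le_of_tendsto hDCT (Eventually.of_forall hFle)
    -- conclude via trim
    have hm := ℱ.le m
    have h1 : ∀ S : Set Ω, MeasurableSet[ℱ m] S →
        ∫ ω in S, (μ[f | ℱ m]) ω ∂μ ≤ ∫ ω in S, g ω ∂μ := by
      intro S hS
      rw [setIntegral_condExp hm hfi hS]
      exact intAbound S hS
    have htrim : μ[f | ℱ m] ≤ᵐ[μ.trim hm] g := by
      apply ae_le_of_forall_setIntegral_le
      · exact Integrable.trim hm integrable_condExp stronglyMeasurable_condExp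
      · exact Integrable.trim hm hgint hgsm
      · intro S hS _
        rw [← setIntegral_trim hm stronglyMeasurable_condExp hS, ← setIntegral_trim hm hgsm hS]
        exact h1 S hS
    exact ae_of_ae_trim hm htrim
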